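/- Let 1 < β < 2. Then for every integer N ≥ 2, the partial sum Σ_{k=0}^{N} ω_k^{(β)} < 0. -/

import Mathlib

open Finset

/-- The coefficients `g_k^{(γ)}`: `g_0 = 1`, `g_k = (1 - (γ+1)/k) g_{k-1}` for `k ≥ 1`. -/
noncomputable def gcoef (γ : ℝ) : ℕ → ℝ
  | 0 => 1
  | k + 1 => (1 - (γ + 1) / (k + 1)) * gcoef γ k

/-- The coefficients `ω_k^{(γ)}`: `ω_0 = (γ/2) g_0` and
`ω_k = (γ/2) g_k + ((2-γ)/2) g_{k-1}` for `k ≥ 1`. -/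
noncomputable def wcoef (γ : ℝ) : ℕ → ℝ
  | 0 => γ / 2 * gcoef γ 0
  | k + 1 => γ / 2 * gcoef γ (k + 1) + (2 - γ) / 2 * gcoef γ k

lemma gcoef_rel (β : ℝ) : ∀ n : ℕ, gcoef β (n + 1) = -(β / (n + 1)) * gcoef (β - 1) n := by
  intro n
  induction n with
  | zero => simp [gcoef]
  | succ n ih =>
    have h1 : ((n : ℝ) + 1) ≠ 0 := by positivity
    have h2 : ((n : ℝ) + 2) ≠ 0 := by positivity
    simp only [gcoef] at *
    push_cast at *
    rw [ih]
    field_simp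
    ring

lemma wsum (β : ℝ) : ∀ n : ℕ, ∑ k ∈ Finset.range (n + 2), wcoef β k
    = β / 2 * gcoef (β - 1) (n + 1) + (2 - β) / 2 * gcoef (β - 1) n := by
  intro n
  induction n with
  | zero =>
    simp [Finset.sum_range_succ, wcoef, gcoef]
    ring
  | succ n ih =>
    have h1 : ((n : ℝ) + 1) ≠ 0 := by positivity
    have h2 : ((n : ℝ) + 2) ≠ 0 := by positivity
    rw [show n + 1 + 2 = (n + 2) + 1 from rfl, Finset.sum_range_succ, ih]
    have hw : wcoef β (n + 2) = β / 2 * gcoef β (n + 2) + (2 - β) / 2 * gcoef β (n + 1) := rfl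
    rw [hw, gcoef_rel β (n + 1), gcoef_rel β n]
    have hg2 : gcoef (β - 1) (n + 2) = (1 - β / ((n : ℝ) + 2)) * gcoef (β - 1) (n + 1) := by
      simp only [gcoef]
      push_cast
      ring_nf
    have hg1 : gcoef (β - 1) (n + 1) = (1 - β / ((n : ℝ) + 1)) * gcoef (β - 1) n := by
      simp only [gcoef]
      ring_nf
    rw [hg2, hg1]
    field_simp
    push_cast
    ring

lemma gcoef_neg (β : ℝ) (hβ1 : 1 < β) (hβ2 : β < 2) :
    ∀ k : ℕ, gcoef (β - 1) (k + 1) < 0 := by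
  intro k
  induction k with
  | zero =>
    simp only [gcoef]
    norm_num
    linarith
  | succ k ih =>
    have hfac : (0 : ℝ) < 1 - (β - 1 + 1) / ((k : ℝ) + 1 + 1) := by
      have hk : (0 : ℝ) < (k : ℝ) + 2 := by positivity
      rw [sub_pos, div_lt_one (by linarith)]
      linarith
    have : gcoef (β - 1) (k + 2) = (1 - (β - 1 + 1) / ((k : ℝ) + 1 + 1)) * gcoef (β - 1) (k + 1) := by
      simp only [gcoef]; push_cast; ring
    rw [this]
    exact mul_neg_of_pos_of_neg hfac ih

theorem stmt9 (β : ℝ) (hβ1 : 1 < β) (hβ2 : β < 2) :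
    ∀ N : ℕ, 2 ≤ N → ∑ k ∈ Finset.range (N + 1), wcoef β k < 0 := by
  intro N hN
  obtain ⟨m, rfl⟩ := Nat.exists_eq_add_of_le hN
  have key := wsum β (m + 1)
  have hm2 : ((m : ℝ) + 2) ≠ 0 := by positivity
  have hg2 : gcoef (β - 1) (m + 2) = (1 - β / ((m : ℝ) + 2)) * gcoef (β - 1) (m + 1) := by
    simp only [gcoef]
    push_cast
    ring_nf
  have hneg := gcoef_neg β hβ1 hβ2 m
  have heq : ∑ k ∈ Finset.range (2 + m + 1), wcoef β k
      = gcoef (β - 1) (m + 1) * (1 - β ^ 2 / (2 * ((m : ℝ) + 2))) := by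
    rw [show 2 + m + 1 = (m + 1) + 2 by ring, key, hg2]
    field_simp
    ring
  rw [heq]
  apply mul_neg_of_neg_of_pos hneg
  have hb4 : β ^ 2 < 4 := by nlinarith
  have : β ^ 2 / (2 * ((m : ℝ) + 2)) < 1 := by
    rw [div_lt_one (by positivity)]
    have : (4 : ℝ) ≤ 2 * ((m : ℝ) + 2) := by
      have : (0 : ℝ) ≤ (m : ℝ) := Nat.cast_nonneg m
      linarith
    linarith
  linarith
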